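/- arXiv:2310.06591 — 4 statements merged into one kernel-verified Lean document; each statement's English description precedes it below -/
import Mathlib

section
/- Let Ω ⊆ ℝ^d be an open set of finite Lebesgue measure and let η ∈ C_c^∞(ℝ^d;ℝ^d) be a smooth compactly supported vector field. Then the function t ↦ |(id + tη)(Ω)| is differentiable at t = 0 and its derivative there equals ∫_Ω div η(x) dx. -/
open MeasureTheory

section Aux


variable {E : Type*} [NormedAddCommGroup E] [NormedSpace ℝ E] [FiniteDimensional ℝ E]

theorem contDiff_clm_det : ContDiff ℝ (⊤ : ℕ∞) fun A : E →L[ℝ] E => A.det := by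
  classical
  let b := Module.finBasis ℝ E
  have h : ∀ A : E →L[ℝ] E,
      A.det = Matrix.det (LinearMap.toMatrix b b A.toLinearMap) := fun A =>
    (LinearMap.det_toMatrix b _).symm
  have hentry : ∀ i j, ContDiff ℝ (⊤ : ℕ∞)
      (fun A : E →L[ℝ] E => LinearMap.toMatrix b b A.toLinearMap i j) := by
    intro i j
    let L : (E →L[ℝ] E) →ₗ[ℝ] ℝ :=
      { toFun := fun A => LinearMap.toMatrix b b A.toLinearMap i j
        map_add' := by intro x y; simp [Matrix.add_apply]
        map_smul' := by intro c x; simp [Matrix.smul_apply] }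
    exact (LinearMap.toContinuousLinearMap L).contDiff
  simp_rw [h, Matrix.det_apply]
  apply ContDiff.sum
  intro σ _
  have : ∀ A : E →L[ℝ] E,
      (Equiv.Perm.sign σ • ∏ i, LinearMap.toMatrix b b A.toLinearMap (σ i) i : ℝ)
      = ((Equiv.Perm.sign σ : ℤ) : ℝ) * ∏ i, LinearMap.toMatrix b b A.toLinearMap (σ i) i := by
    intro A
    rw [Units.smul_def, zsmul_eq_mul]
  simp_rw [this]
  exact (contDiff_const (c := ((Equiv.Perm.sign σ : ℤ) : ℝ))).mul (contDiff_prod fun i _ => hentry (σ i) i)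



variable {E : Type*} [NormedAddCommGroup E] [NormedSpace ℝ E] [FiniteDimensional ℝ E]

theorem det_one_add_smul_clm (A : E →L[ℝ] E) :
    ∃ q : Polynomial ℝ, ∀ t : ℝ, ((1 : E →L[ℝ] E) + t • A).det
      = 1 + LinearMap.trace ℝ E A.toLinearMap * t + Polynomial.eval t q * t ^ 2 := by
  classical
  let b := Module.finBasis ℝ E
  set M := LinearMap.toMatrix b b A.toLinearMap with hM
  refine ⟨(Matrix.det (1 + (Polynomial.X : Polynomial ℝ) • M.map Polynomial.C)).divX.divX,
    fun t => ?_⟩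
  have h1 : ((1 : E →L[ℝ] E) + t • A).det
      = Matrix.det (LinearMap.toMatrix b b ((1 : E →L[ℝ] E) + t • A).toLinearMap) :=
    (LinearMap.det_toMatrix b _).symm
  have h2 : LinearMap.toMatrix b b ((1 : E →L[ℝ] E) + t • A).toLinearMap = 1 + t • M := by
    rw [ContinuousLinearMap.coe_add, ContinuousLinearMap.coe_smul, map_add, _root_.map_smul,
      ContinuousLinearMap.one_def, ContinuousLinearMap.coe_id, LinearMap.toMatrix_id, hM]
  rw [h1, h2, Matrix.det_one_add_smul t M, LinearMap.trace_eq_matrix_trace ℝ b]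

theorem hasDerivAt_det_one_add_smul (A : E →L[ℝ] E) :
    HasDerivAt (fun t : ℝ => ((1 : E →L[ℝ] E) + t • A).det)
      (LinearMap.trace ℝ E A.toLinearMap) 0 := by
  obtain ⟨q, hq⟩ := det_one_add_smul_clm A
  set τ := LinearMap.trace ℝ E A.toLinearMap
  have ha : HasDerivAt (fun t : ℝ => 1 + τ * t) τ 0 := by
    simpa using ((hasDerivAt_id (0 : ℝ)).const_mul τ).const_add 1
  have hb : HasDerivAt (fun t : ℝ => Polynomial.eval t q * t ^ 2) 0 0 := by
    have := (q.hasDerivAt (0 : ℝ)).mul (hasDerivAt_pow 2 (0 : ℝ))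
    simpa [Pi.mul_def] using this
  have := ha.add hb
  simp_rw [Pi.add_def, ← hq] at this
  simpa using this

theorem det_one_add_pos [CompleteSpace E] {B : E →L[ℝ] E} (hB : ‖B‖ < 1) :
    0 < ((1 : E →L[ℝ] E) + B).det := by
  have hne : ∀ C : E →L[ℝ] E, ‖C‖ < 1 → ((1 : E →L[ℝ] E) + C).det ≠ 0 := by
    intro C hC
    have h' : ‖-C‖ < 1 := by simpa using hC
    set u := Units.oneSub (-C) h' with hu
    have huv : (u : E →L[ℝ] E) = 1 + C := by
      simp [hu, Units.val_oneSub, sub_neg_eq_add]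
    have hmul : ((u : E →L[ℝ] E) * (↑u⁻¹ : E →L[ℝ] E)).det = 1 := by
      rw [u.mul_inv]
      rw [ContinuousLinearMap.det, ContinuousLinearMap.one_def, ContinuousLinearMap.coe_id,
        LinearMap.det_id]
    rw [show ((u : E →L[ℝ] E) * (↑u⁻¹ : E →L[ℝ] E)) = (u : E →L[ℝ] E).comp (↑u⁻¹ : E →L[ℝ] E)
        from rfl] at hmul
    rw [ContinuousLinearMap.det, ContinuousLinearMap.toLinearMap_comp, LinearMap.det_comp] at hmul
    intro h0
    rw [huv] at hmul
    rw [ContinuousLinearMap.det] at h0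
    rw [h0, zero_mul] at hmul
    exact one_ne_zero hmul.symm
  by_contra hle
  push_neg at hle
  have hcont : ContinuousOn (fun s : ℝ => ((1 : E →L[ℝ] E) + s • B).det) (Set.Icc 0 1) := by
    apply Continuous.continuousOn
    exact ContinuousLinearMap.continuous_det.comp (continuous_const.add (continuous_id.smul continuous_const))
  have h0 : ((1 : E →L[ℝ] E) + (0 : ℝ) • B).det = 1 := by
    rw [zero_smul, add_zero, ContinuousLinearMap.det, ContinuousLinearMap.one_def,
      ContinuousLinearMap.coe_id, LinearMap.det_id]
  have h1v : ((1 : E →L[ℝ] E) + (1 : ℝ) • B).det ≤ 0 := by simpa using hle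
  have := intermediate_value_Icc' (by norm_num : (0:ℝ) ≤ 1) hcont
  have hmem : (0 : ℝ) ∈ Set.Icc ((1 : E →L[ℝ] E) + (1:ℝ) • B).det ((1 : E →L[ℝ] E) + (0:ℝ) • B).det := by
    constructor
    · exact h1v
    · rw [h0]; norm_num
  obtain ⟨s, hs, hsv⟩ := this hmem
  have : ‖s • B‖ < 1 := by
    rw [norm_smul s B]
    calc ‖s‖ * ‖B‖ ≤ 1 * ‖B‖ := by
          apply mul_le_mul_of_nonneg_right _ (norm_nonneg _)
          rw [Real.norm_eq_abs, abs_le]; exact ⟨by linarith [hs.1], hs.2⟩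
      _ < 1 := by simpa using hB
  exact hne (s • B) this hsv



variable {E : Type*} [NormedAddCommGroup E] [NormedSpace ℝ E] [FiniteDimensional ℝ E]

theorem det_clm_one : ((1 : E →L[ℝ] E)).det = 1 := by
  rw [ContinuousLinearMap.det, ContinuousLinearMap.one_def, ContinuousLinearMap.coe_id,
    LinearMap.det_id]

end Aux

section Main

/-- The divergence of a vector field on `ℝ^d`: the trace of its Jacobian. -/
noncomputable def vdiv {d : ℕ} (η : EuclideanSpace ℝ (Fin d) → EuclideanSpace ℝ (Fin d))
    (x : EuclideanSpace ℝ (Fin d)) : ℝ :=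
  LinearMap.trace ℝ (EuclideanSpace ℝ (Fin d)) (fderiv ℝ η x).toLinearMap

set_option maxHeartbeats 1000000 in
theorem stmt_0 {d : ℕ} (Ω : Set (EuclideanSpace ℝ (Fin d))) (hΩ : IsOpen Ω)
    (hvol : volume Ω < ⊤)
    (η : EuclideanSpace ℝ (Fin d) → EuclideanSpace ℝ (Fin d))
    (hη : ContDiff ℝ (⊤ : ℕ∞) η) (hηc : HasCompactSupport η) :
    HasDerivAt (fun t : ℝ => (volume ((fun x => x + t • η x) '' Ω)).toReal)
      (∫ x in Ω, vdiv η x) 0 := by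
  classical
  have hone : ((⊤ : ℕ∞) : WithTop ℕ∞) ≠ 0 := by simp
  have hA_cont : Continuous (fderiv ℝ η) := hη.continuous_fderiv hone
  have hA_supp : HasCompactSupport (fderiv ℝ η) := hηc.fderiv (𝕜 := ℝ)
  obtain ⟨M, hM⟩ := hA_supp.exists_bound_of_continuous hA_cont
  have hM0 : (0:ℝ) ≤ M := le_trans (norm_nonneg _) (hM 0)
  have hlip : LipschitzWith (Real.toNNReal M) η :=
    lipschitzWith_of_nnnorm_fderiv_le (𝕜 := ℝ) (hη.differentiable hone) (fun x => by
      rw [← NNReal.coe_le_coe, coe_nnnorm, Real.coe_toNNReal _ hM0]; exact hM x)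
  have hGdet : ContDiff ℝ (⊤ : ℕ∞) fun A : (EuclideanSpace ℝ (Fin d)) →L[ℝ] (EuclideanSpace ℝ (Fin d)) => A.det := contDiff_clm_det
  obtain ⟨C, hC⟩ := (isCompact_closedBall (1 : (EuclideanSpace ℝ (Fin d)) →L[ℝ] (EuclideanSpace ℝ (Fin d))) 1).exists_bound_of_continuousOn
    (hGdet.continuous_fderiv hone).continuousOn
  obtain ⟨C₀, hC₀⟩ := (isCompact_closedBall (1 : (EuclideanSpace ℝ (Fin d)) →L[ℝ] (EuclideanSpace ℝ (Fin d))) 1).exists_bound_of_continuousOn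
    ((ContinuousLinearMap.continuous_det :
      Continuous fun f : (EuclideanSpace ℝ (Fin d)) →L[ℝ] (EuclideanSpace ℝ (Fin d)) => f.det).continuousOn)
  have hCnn : (0:ℝ) ≤ C :=
    le_trans (norm_nonneg _) (hC 1 (Metric.mem_closedBall_self zero_le_one))
  haveI : IsFiniteMeasure (volume.restrict Ω) := ⟨by rwa [Measure.restrict_apply_univ]⟩
  set δ : ℝ := (2 * (M + 1))⁻¹ with hδdef
  have hδpos : 0 < δ := by rw [hδdef]; positivity
  have hail : ∀ t : ℝ, |t| < δ → |t| * (M + 1) < 1/2 := by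
    intro t ht
    have h1 : (0:ℝ) < M + 1 := by linarith
    have h2 := mul_lt_mul_of_pos_right ht h1
    have h3 : δ * (M + 1) = 1/2 := by rw [hδdef]; field_simp
    linarith
  have hsm : ∀ (t:ℝ) (x : (EuclideanSpace ℝ (Fin d))), |t| < δ → ‖t • fderiv ℝ η x‖ < 1/2 := by
    intro t x ht
    rw [norm_smul, Real.norm_eq_abs]
    calc |t| * ‖fderiv ℝ η x‖ ≤ |t| * (M+1) := by
          apply mul_le_mul_of_nonneg_left _ (abs_nonneg t); linarith [hM x]
      _ < 1/2 := hail t ht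
  have hpos : ∀ (t:ℝ) (x : (EuclideanSpace ℝ (Fin d))), |t| < δ →
      0 < ((1 : (EuclideanSpace ℝ (Fin d)) →L[ℝ] (EuclideanSpace ℝ (Fin d))) + t • fderiv ℝ η x).det := fun t x ht =>
    det_one_add_pos (lt_trans (hsm t x ht) (by norm_num))
  have hcontg : ∀ t : ℝ, Continuous fun x : (EuclideanSpace ℝ (Fin d)) => ((1 : (EuclideanSpace ℝ (Fin d)) →L[ℝ] (EuclideanSpace ℝ (Fin d))) + t • fderiv ℝ η x).det := by
    intro t
    exact (ContinuousLinearMap.continuous_det :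
      Continuous fun f : (EuclideanSpace ℝ (Fin d)) →L[ℝ] (EuclideanSpace ℝ (Fin d)) => f.det).comp (continuous_const.add (hA_cont.const_smul t))
  have hmem : ∀ (t:ℝ) (x : (EuclideanSpace ℝ (Fin d))), |t| < δ →
      ((1 : (EuclideanSpace ℝ (Fin d)) →L[ℝ] (EuclideanSpace ℝ (Fin d))) + t • fderiv ℝ η x) ∈ Metric.closedBall (1 : (EuclideanSpace ℝ (Fin d)) →L[ℝ] (EuclideanSpace ℝ (Fin d))) 1 := by
    intro t x ht
    rw [Metric.mem_closedBall, dist_eq_norm, add_sub_cancel_left]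
    exact le_trans (hsm t x ht).le (by norm_num)
  have hint : ∀ t : ℝ, |t| < δ →
      Integrable (fun x => ((1 : (EuclideanSpace ℝ (Fin d)) →L[ℝ] (EuclideanSpace ℝ (Fin d))) + t • fderiv ℝ η x).det) (volume.restrict Ω) := by
    intro t ht
    refine ⟨(hcontg t).aestronglyMeasurable, HasFiniteIntegral.of_bounded (C := C₀) ?_⟩
    exact Filter.Eventually.of_forall fun x => hC₀ _ (hmem t x ht)
  -- Key identity: for small `t` the volume of the image is the integral of the Jacobian.
  have key : ∀ t : ℝ, |t| < δ →
      (volume ((fun x => x + t • η x) '' Ω)).toReal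
        = ∫ x in Ω, ((1 : (EuclideanSpace ℝ (Fin d)) →L[ℝ] (EuclideanSpace ℝ (Fin d))) + t • fderiv ℝ η x).det := by
    intro t ht
    have hder : ∀ x ∈ Ω, HasFDerivWithinAt (fun y => y + t • η y)
        ((1 : (EuclideanSpace ℝ (Fin d)) →L[ℝ] (EuclideanSpace ℝ (Fin d))) + t • fderiv ℝ η x) Ω x := by
      intro x _
      have h := ((hη.differentiable hone) x).hasFDerivAt
      have h2 : HasFDerivAt (fun y => y + t • η y)
          (ContinuousLinearMap.id ℝ (EuclideanSpace ℝ (Fin d)) + t • fderiv ℝ η x) x :=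
        (hasFDerivAt_id x).add (h.const_smul t)
      rw [ContinuousLinearMap.one_def]
      exact h2.hasFDerivWithinAt
    have hinj : Set.InjOn (fun y => y + t • η y) Ω := by
      intro x hx y hy hxy
      by_contra hne
      have hd : dist (η x) (η y) ≤ M * dist x y := by
        have h := hlip.dist_le_mul x y
        rwa [Real.coe_toNNReal _ hM0] at h
      have h1 : x - y = t • η y - t • η x := by
        rw [sub_eq_sub_iff_add_eq_add]
        simpa [add_comm] using (hxy : x + t • η x = y + t • η y)
      have e2 : ‖η y - η x‖ ≤ M * ‖x - y‖ := by
        calc ‖η y - η x‖ = dist (η x) (η y) := by rw [dist_eq_norm, norm_sub_rev]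
          _ ≤ M * dist x y := hd
          _ = M * ‖x - y‖ := by rw [dist_eq_norm]
      have h2 : ‖x - y‖ ≤ |t| * (M * ‖x - y‖) := by
        calc ‖x - y‖ = |t| * ‖η y - η x‖ := by
              rw [h1, ← smul_sub, norm_smul, Real.norm_eq_abs]
          _ ≤ |t| * (M * ‖x - y‖) := mul_le_mul_of_nonneg_left e2 (abs_nonneg t)
      have h3 : 0 < ‖x - y‖ := by rw [norm_pos_iff, sub_ne_zero]; exact hne
      have h4 : |t| * M < 1 := by
        have := hail t ht
        nlinarith [abs_nonneg t]
      nlinarith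
    have h1 := lintegral_abs_det_fderiv_eq_addHaar_image volume hΩ.measurableSet hder hinj
    have h2 : (∫⁻ x in Ω, ENNReal.ofReal |((1 : (EuclideanSpace ℝ (Fin d)) →L[ℝ] (EuclideanSpace ℝ (Fin d))) + t • fderiv ℝ η x).det|)
        = ∫⁻ x in Ω, ENNReal.ofReal (((1 : (EuclideanSpace ℝ (Fin d)) →L[ℝ] (EuclideanSpace ℝ (Fin d))) + t • fderiv ℝ η x).det) := by
      apply lintegral_congr
      intro x
      rw [abs_of_pos (hpos t x ht)]
    have h3 := ofReal_integral_eq_lintegral_ofReal (hint t ht)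
      (Filter.Eventually.of_forall fun x => (hpos t x ht).le)
    calc (volume ((fun x => x + t • η x) '' Ω)).toReal
        = (∫⁻ x in Ω, ENNReal.ofReal |((1 : (EuclideanSpace ℝ (Fin d)) →L[ℝ] (EuclideanSpace ℝ (Fin d))) + t • fderiv ℝ η x).det|).toReal := by
          rw [h1]
      _ = (ENNReal.ofReal (∫ x in Ω, ((1 : (EuclideanSpace ℝ (Fin d)) →L[ℝ] (EuclideanSpace ℝ (Fin d))) + t • fderiv ℝ η x).det)).toReal := by
          rw [h2, ← h3]
      _ = ∫ x in Ω, ((1 : (EuclideanSpace ℝ (Fin d)) →L[ℝ] (EuclideanSpace ℝ (Fin d))) + t • fderiv ℝ η x).det :=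
          ENNReal.toReal_ofReal (integral_nonneg fun x => (hpos t x ht).le)
  -- Differentiation under the integral sign.
  set D := fderiv ℝ (fun B : (EuclideanSpace ℝ (Fin d)) →L[ℝ] (EuclideanSpace ℝ (Fin d)) => B.det) with hD
  have hD_cont : Continuous D := hGdet.continuous_fderiv hone
  have hchain : ∀ (x : (EuclideanSpace ℝ (Fin d))) (t : ℝ),
      HasDerivAt (fun s : ℝ => ((1 : (EuclideanSpace ℝ (Fin d)) →L[ℝ] (EuclideanSpace ℝ (Fin d))) + s • fderiv ℝ η x).det)
        (D ((1 : (EuclideanSpace ℝ (Fin d)) →L[ℝ] (EuclideanSpace ℝ (Fin d))) + t • fderiv ℝ η x) (fderiv ℝ η x)) t := by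
    intro x t
    have hin : HasDerivAt (fun s : ℝ => (1 : (EuclideanSpace ℝ (Fin d)) →L[ℝ] (EuclideanSpace ℝ (Fin d))) + s • fderiv ℝ η x)
        (fderiv ℝ η x) t := by
      simpa using ((hasDerivAt_id t).smul_const (fderiv ℝ η x)).const_add (1 : (EuclideanSpace ℝ (Fin d)) →L[ℝ] (EuclideanSpace ℝ (Fin d)))
    exact ((hGdet.differentiable hone) _).hasFDerivAt.comp_hasDerivAt t hin
  have hD1 : ∀ x : (EuclideanSpace ℝ (Fin d)),
      D ((1 : (EuclideanSpace ℝ (Fin d)) →L[ℝ] (EuclideanSpace ℝ (Fin d))) + (0:ℝ) • fderiv ℝ η x) (fderiv ℝ η x) = vdiv η x := by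
    intro x
    have h1 := hchain x 0
    have h2 := hasDerivAt_det_one_add_smul (fderiv ℝ η x)
    exact h1.unique h2
  have main := hasDerivAt_integral_of_dominated_loc_of_deriv_le (μ := volume.restrict Ω)
      (F := fun (t : ℝ) (x : (EuclideanSpace ℝ (Fin d))) => ((1 : (EuclideanSpace ℝ (Fin d)) →L[ℝ] (EuclideanSpace ℝ (Fin d))) + t • fderiv ℝ η x).det)
      (F' := fun (t : ℝ) (x : (EuclideanSpace ℝ (Fin d))) => D ((1 : (EuclideanSpace ℝ (Fin d)) →L[ℝ] (EuclideanSpace ℝ (Fin d))) + t • fderiv ℝ η x) (fderiv ℝ η x))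
      (x₀ := 0) (bound := fun _ => C * M) (Metric.ball_mem_nhds (0:ℝ) hδpos)
      (Filter.Eventually.of_forall fun t => (hcontg t).aestronglyMeasurable)
      ?_ ?_ ?_ ?_ ?_
  · have heq : (∫ x, D ((1 : (EuclideanSpace ℝ (Fin d)) →L[ℝ] (EuclideanSpace ℝ (Fin d))) + (0:ℝ) • fderiv ℝ η x) (fderiv ℝ η x)
        ∂(volume.restrict Ω)) = ∫ x in Ω, vdiv η x := by
      apply integral_congr_ae
      exact Filter.Eventually.of_forall hD1
    have hfinal : HasDerivAt
        (fun t : ℝ => ∫ x in Ω, ((1 : (EuclideanSpace ℝ (Fin d)) →L[ℝ] (EuclideanSpace ℝ (Fin d))) + t • fderiv ℝ η x).det)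
        (∫ x in Ω, vdiv η x) 0 := heq ▸ main.2
    apply hfinal.congr_of_eventuallyEq
    apply Filter.eventuallyEq_of_mem (Metric.ball_mem_nhds (0:ℝ) hδpos)
    intro t ht
    exact key t (by rwa [Metric.mem_ball, dist_zero_right, Real.norm_eq_abs] at ht)
  · -- Integrable (F 0)
    have h : (fun x : (EuclideanSpace ℝ (Fin d)) => ((1 : (EuclideanSpace ℝ (Fin d)) →L[ℝ] (EuclideanSpace ℝ (Fin d))) + (0:ℝ) • fderiv ℝ η x).det)
        = fun _ : (EuclideanSpace ℝ (Fin d)) => (1:ℝ) := funext fun x => (congrArg ContinuousLinearMap.det (add_eq_left.mpr (zero_smul ℝ (fderiv ℝ η x)))).trans det_clm_one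
    show Integrable (fun x : EuclideanSpace ℝ (Fin d) =>
      ((1 : (EuclideanSpace ℝ (Fin d)) →L[ℝ] (EuclideanSpace ℝ (Fin d)))
        + (0:ℝ) • fderiv ℝ η x).det) (volume.restrict Ω)
    rw [h]
    exact integrable_const 1
  · -- AEStronglyMeasurable (F' 0)
    exact ((hD_cont.comp (continuous_const.add
      (hA_cont.const_smul (0:ℝ)))).clm_apply hA_cont).aestronglyMeasurable
  · -- bound
    apply Filter.Eventually.of_forall
    intro x t ht
    have ht' : |t| < δ := by rwa [Metric.mem_ball, dist_zero_right, Real.norm_eq_abs] at ht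
    calc ‖D ((1 : (EuclideanSpace ℝ (Fin d)) →L[ℝ] (EuclideanSpace ℝ (Fin d))) + t • fderiv ℝ η x) (fderiv ℝ η x)‖
        ≤ ‖D ((1 : (EuclideanSpace ℝ (Fin d)) →L[ℝ] (EuclideanSpace ℝ (Fin d))) + t • fderiv ℝ η x)‖ * ‖fderiv ℝ η x‖ :=
          ContinuousLinearMap.le_opNorm _ _
      _ ≤ C * M := mul_le_mul (hC _ (hmem t x ht')) (hM x) (norm_nonneg _) hCnn
  · exact integrable_const _
  · exact Filter.Eventually.of_forall fun x t _ => hchain x t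

end Main
end

section
/- Let Ω ⊆ ℝ^d be an open set of finite Lebesgue measure, let η, ξ ∈ C_c^∞(ℝ^d;ℝ^d), and set L := sup_x ‖Dη(x)‖ and M := sup_x ‖Dξ(x)‖ (operator norms). Then for every (t,s) ∈ ℝ² with |t|·L + |s|·M < 1 one has |(id + tη + sξ)(Ω)| = ∫_Ω det(I + t Dη(x) + s Dξ(x)) dx; in particular, on the set {(t,s) : |t|·L + |s|·M < 1} the function (t,s) ↦ |(id + tη + sξ)(Ω)| is a polynomial in (t,s) of degree at most d, hence C^∞. -/
open MeasureTheory

private lemma aux_det_pos {d : ℕ} (C : EuclideanSpace ℝ (Fin d) →L[ℝ] EuclideanSpace ℝ (Fin d))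
    (hC : ‖C‖ < 1) :
    0 < LinearMap.det ((1 + C : EuclideanSpace ℝ (Fin d) →L[ℝ] EuclideanSpace ℝ (Fin d)) :
      EuclideanSpace ℝ (Fin d) →ₗ[ℝ] EuclideanSpace ℝ (Fin d)) := by
  set b := (EuclideanSpace.basisFun (Fin d) ℝ).toBasis with hb
  set MC := LinearMap.toMatrix b b (C : EuclideanSpace ℝ (Fin d) →ₗ[ℝ] EuclideanSpace ℝ (Fin d))
    with hMC
  set g : ℝ → ℝ := fun τ => Matrix.det (1 + τ • MC) with hg
  have hgc : Continuous g := by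
    apply Continuous.matrix_det
    exact continuous_const.add (continuous_id.smul continuous_const)
  have hgτ : ∀ τ : ℝ, g τ = LinearMap.det
      ((1 + τ • C : EuclideanSpace ℝ (Fin d) →L[ℝ] EuclideanSpace ℝ (Fin d)) :
        EuclideanSpace ℝ (Fin d) →ₗ[ℝ] EuclideanSpace ℝ (Fin d)) := by
    intro τ
    rw [← LinearMap.det_toMatrix b]
    simp only [hg, hMC, ContinuousLinearMap.coe_add, ContinuousLinearMap.coe_smul,
      ContinuousLinearMap.one_def, ContinuousLinearMap.coe_id, map_add, _root_.map_smul,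
      LinearMap.toMatrix_id]
  have hnv : ∀ τ ∈ Set.Icc (0:ℝ) 1, g τ ≠ 0 := by
    intro τ hτ
    have h1 : ‖-(τ • C)‖ < 1 := by
      rw [norm_neg]
      have : ‖τ • C‖ = |τ| * ‖C‖ := by
        rw [show |τ| = ‖τ‖ from rfl]
        exact norm_smul τ C
      rw [this, abs_of_nonneg hτ.1]
      nlinarith [norm_nonneg C, hτ.2]
    have hu : IsUnit (1 + τ • C : EuclideanSpace ℝ (Fin d) →L[ℝ] EuclideanSpace ℝ (Fin d)) :=
      ⟨Units.oneSub _ h1, by simp [Units.val_oneSub, sub_neg_eq_add]⟩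
    have hu2 : IsUnit ((1 + τ • C : EuclideanSpace ℝ (Fin d) →L[ℝ] EuclideanSpace ℝ (Fin d)) :
        EuclideanSpace ℝ (Fin d) →ₗ[ℝ] EuclideanSpace ℝ (Fin d)) :=
      hu.map (ContinuousLinearMap.toLinearMapRingHom)
    have hu3 := hu2.map LinearMap.det
    rw [hgτ τ]
    exact hu3.ne_zero
  have h0 : g 0 = 1 := by simp [hg]
  have key : 0 < g 1 := by
    by_contra hle
    push_neg at hle
    have hne := hnv 1 (by norm_num)
    have hlt : g 1 < 0 := lt_of_le_of_ne hle hne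
    have hmem : (0:ℝ) ∈ Set.Icc (g 1) (g 0) := ⟨le_of_lt hlt, by rw [h0]; norm_num⟩
    obtain ⟨τ, hτ, hτ0⟩ := intermediate_value_Icc' (by norm_num : (0:ℝ) ≤ 1)
      hgc.continuousOn hmem
    exact hnv τ hτ hτ0
  have := hgτ 1
  rw [one_smul] at this
  rwa [this] at key

set_option maxHeartbeats 1000000 in
theorem stmt_2 {d : ℕ} (Ω : Set (EuclideanSpace ℝ (Fin d))) (hΩ : IsOpen Ω)
    (hvol : volume Ω < ⊤)
    (η ξ : EuclideanSpace ℝ (Fin d) → EuclideanSpace ℝ (Fin d))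
    (hη : ContDiff ℝ (⊤ : ℕ∞) η) (hηc : HasCompactSupport η)
    (hξ : ContDiff ℝ (⊤ : ℕ∞) ξ) (hξc : HasCompactSupport ξ)
    (L M : ℝ) (hL : L = ⨆ x : EuclideanSpace ℝ (Fin d), ‖fderiv ℝ η x‖)
    (hM : M = ⨆ x : EuclideanSpace ℝ (Fin d), ‖fderiv ℝ ξ x‖) :
    (∀ t s : ℝ, |t| * L + |s| * M < 1 →
      (volume ((fun x => x + t • η x + s • ξ x) '' Ω)).toReal =
        ∫ x in Ω, LinearMap.det
          ((LinearMap.id : EuclideanSpace ℝ (Fin d) →ₗ[ℝ] EuclideanSpace ℝ (Fin d))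
            + t • (fderiv ℝ η x).toLinearMap + s • (fderiv ℝ ξ x).toLinearMap)) ∧
    (∃ P : MvPolynomial (Fin 2) ℝ, P.totalDegree ≤ d ∧
      ∀ t s : ℝ, |t| * L + |s| * M < 1 →
        (volume ((fun x => x + t • η x + s • ξ x) '' Ω)).toReal =
          MvPolynomial.eval ![t, s] P) ∧
    ContDiffOn ℝ (⊤ : ℕ∞)
      (fun p : ℝ × ℝ =>
        (volume ((fun x => x + p.1 • η x + p.2 • ξ x) '' Ω)).toReal)
      {p : ℝ × ℝ | |p.1| * L + |p.2| * M < 1} := by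
  classical
  -- derivative continuity & bounds
  have hηc' : HasCompactSupport (fderiv ℝ η) := hηc.fderiv (𝕜 := ℝ)
  have hξc' : HasCompactSupport (fderiv ℝ ξ) := hξc.fderiv (𝕜 := ℝ)
  have contDη : Continuous (fderiv ℝ η) := hη.continuous_fderiv (by simp)
  have contDξ : Continuous (fderiv ℝ ξ) := hξ.continuous_fderiv (by simp)
  have hdiffη : Differentiable ℝ η := hη.differentiable (by simp)
  have hdiffξ : Differentiable ℝ ξ := hξ.differentiable (by simp)
  have hLb : ∀ x, ‖fderiv ℝ η x‖ ≤ L := by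
    intro x
    rw [hL]
    obtain ⟨c, hc⟩ := contDη.bounded_above_of_compact_support hηc'
    have hbdd : BddAbove (Set.range fun y => ‖fderiv ℝ η y‖) := by
      refine ⟨c, ?_⟩
      rintro y ⟨z, rfl⟩
      exact hc z
    exact le_ciSup hbdd x
  have hMb : ∀ x, ‖fderiv ℝ ξ x‖ ≤ M := by
    intro x
    rw [hM]
    obtain ⟨c, hc⟩ := contDξ.bounded_above_of_compact_support hξc'
    have hbdd : BddAbove (Set.range fun y => ‖fderiv ℝ ξ y‖) := by
      refine ⟨c, ?_⟩
      rintro y ⟨z, rfl⟩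
      exact hc z
    exact le_ciSup hbdd x
  -- matrices
  set b := (EuclideanSpace.basisFun (Fin d) ℝ).toBasis with hb
  set φ : (EuclideanSpace ℝ (Fin d) →L[ℝ] EuclideanSpace ℝ (Fin d)) →ₗ[ℝ]
      Matrix (Fin d) (Fin d) ℝ :=
    (LinearMap.toMatrix b b).toLinearMap ∘ₗ ContinuousLinearMap.coeLM ℝ with hφ
  set A : EuclideanSpace ℝ (Fin d) → Matrix (Fin d) (Fin d) ℝ := fun x => φ (fderiv ℝ η x)
    with hA
  set B : EuclideanSpace ℝ (Fin d) → Matrix (Fin d) (Fin d) ℝ := fun x => φ (fderiv ℝ ξ x)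
    with hB
  have contA : Continuous A := φ.continuous_of_finiteDimensional.comp contDη
  have contB : Continuous B := φ.continuous_of_finiteDimensional.comp contDξ
  have hdet : ∀ (t s : ℝ) (x : EuclideanSpace ℝ (Fin d)),
      LinearMap.det
        ((LinearMap.id : EuclideanSpace ℝ (Fin d) →ₗ[ℝ] EuclideanSpace ℝ (Fin d))
          + t • (fderiv ℝ η x).toLinearMap + s • (fderiv ℝ ξ x).toLinearMap)
        = Matrix.det ((1 : Matrix (Fin d) (Fin d) ℝ) + t • A x + s • B x) := by
    intro t s x
    rw [← LinearMap.det_toMatrix b]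
    congr 1
    simp only [hA, hB, hφ, map_add, _root_.map_smul, LinearMap.toMatrix_id,
      LinearMap.coe_comp, Function.comp_apply, LinearEquiv.coe_coe]
    rfl
  -- the coefficient functions
  set D : (Fin d → Fin 3) → EuclideanSpace ℝ (Fin d) → ℝ := fun r x =>
    Matrix.det (Matrix.of fun i => ![(1 : Matrix (Fin d) (Fin d) ℝ) i, A x i, B x i] (r i))
    with hD
  have contD : ∀ r, Continuous (D r) := by
    intro r
    apply Continuous.matrix_det
    apply continuous_matrix
    intro i j
    have : ∀ k : Fin 3,
        Continuous fun x => ![(1 : Matrix (Fin d) (Fin d) ℝ) i, A x i, B x i] k j := by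
      intro k
      fin_cases k
      · simpa using continuous_const
      · simpa using contA.matrix_elem i j
      · simpa using contB.matrix_elem i j
    exact this (r i)
  have intD : ∀ r, IntegrableOn (D r) Ω volume := by
    intro r
    by_cases hr : ∃ i, r i ≠ 0
    · obtain ⟨i, hi⟩ := hr
      have hcs : HasCompactSupport (D r) := by
        apply HasCompactSupport.intro (hηc'.union hξc')
        intro x hx
        have hA0 : A x = 0 := by
          simp only [hA]
          have : fderiv ℝ η x = 0 :=
            image_eq_zero_of_notMem_tsupport (fun h => hx (Set.mem_union_left _ h))
          rw [this, map_zero]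
        have hB0 : B x = 0 := by
          simp only [hB]
          have : fderiv ℝ ξ x = 0 :=
            image_eq_zero_of_notMem_tsupport (fun h => hx (Set.mem_union_right _ h))
          rw [this, map_zero]
        apply Matrix.det_eq_zero_of_row_eq_zero i
        intro j
        rw [hA0, hB0]
        have : ∀ k : Fin 3, k ≠ 0 →
            ![(1 : Matrix (Fin d) (Fin d) ℝ) i, (0 : Matrix (Fin d) (Fin d) ℝ) i,
              (0 : Matrix (Fin d) (Fin d) ℝ) i] k j = 0 := by
          intro k hk
          fin_cases k
          · exact absurd rfl hk
          · simp [Matrix.zero_apply]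
          · simp [Matrix.vecHead, Matrix.vecTail, Matrix.zero_apply]
        simpa using this (r i) hi
      exact ((contD r).integrable_of_hasCompactSupport hcs).integrableOn
    · push_neg at hr
      have : D r = fun _ => (1 : ℝ) := by
        funext x
        simp only [hD]
        have h1 : (Matrix.of fun i => ![(1 : Matrix (Fin d) (Fin d) ℝ) i, A x i, B x i] (r i))
            = (1 : Matrix (Fin d) (Fin d) ℝ) := by
          ext i j
          simp only [Matrix.of_apply]
          rw [hr i]
          simp
        rw [h1, Matrix.det_one]
      rw [this]
      exact integrableOn_const hvol.ne
  -- row expansion of the determinant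
  have hexp : ∀ (t s : ℝ) (x : EuclideanSpace ℝ (Fin d)),
      Matrix.det ((1 : Matrix (Fin d) (Fin d) ℝ) + t • A x + s • B x) =
        ∑ r : Fin d → Fin 3, (∏ i, ![(1:ℝ), t, s] (r i)) * D r x := by
    intro t s x
    have hrow : ((1 : Matrix (Fin d) (Fin d) ℝ) + t • A x + s • B x) =
        Matrix.of fun i => ∑ k : Fin 3,
          (![(1:ℝ), t, s] k) • (![(1 : Matrix (Fin d) (Fin d) ℝ) i, A x i, B x i] k) := by
      ext i j
      simp [Fin.sum_univ_three, Matrix.add_apply]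
    calc ((1 : Matrix (Fin d) (Fin d) ℝ) + t • A x + s • B x).det
        = (Matrix.detRowAlternating (R := ℝ) (n := Fin d)).toMultilinearMap
            (fun i => ∑ k : Fin 3, (![(1:ℝ), t, s] k) •
              (![(1 : Matrix (Fin d) (Fin d) ℝ) i, A x i, B x i] k)) := by
          rw [hrow]; rfl
      _ = ∑ r : Fin d → Fin 3, (Matrix.detRowAlternating (R := ℝ) (n := Fin d)).toMultilinearMap
            (fun i => (![(1:ℝ), t, s] (r i)) •
              (![(1 : Matrix (Fin d) (Fin d) ℝ) i, A x i, B x i] (r i))) :=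
          MultilinearMap.map_sum _ _
      _ = ∑ r : Fin d → Fin 3, (∏ i, ![(1:ℝ), t, s] (r i)) * D r x := by
          refine Finset.sum_congr rfl fun r _ => ?_
          rw [(Matrix.detRowAlternating (R := ℝ) (n := Fin d)).toMultilinearMap.map_smul_univ,
            smul_eq_mul]
          rfl
  -- the polynomial
  set P : MvPolynomial (Fin 2) ℝ := ∑ r : Fin d → Fin 3, (∫ x in Ω, D r x) •
      ∏ i, ![(1 : MvPolynomial (Fin 2) ℝ), MvPolynomial.X 0, MvPolynomial.X 1] (r i) with hP
  have hPdeg : P.totalDegree ≤ d := by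
    rw [hP]
    refine (MvPolynomial.totalDegree_finset_sum _ _).trans ?_
    refine Finset.sup_le fun r _ => ?_
    refine (MvPolynomial.totalDegree_smul_le _ _).trans ?_
    refine (MvPolynomial.totalDegree_finset_prod _ _).trans ?_
    calc ∑ i, (![(1 : MvPolynomial (Fin 2) ℝ), MvPolynomial.X 0,
          MvPolynomial.X 1] (r i)).totalDegree
        ≤ ∑ _i : Fin d, 1 := by
          refine Finset.sum_le_sum fun i _ => ?_
          have : ∀ k : Fin 3, (![(1 : MvPolynomial (Fin 2) ℝ), MvPolynomial.X 0,
              MvPolynomial.X 1] k).totalDegree ≤ 1 := by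
            intro k
            fin_cases k
            · simp
            · simp [MvPolynomial.totalDegree_X]
            · simp [MvPolynomial.totalDegree_X]
          exact this (r i)
      _ = d := by simp
  have hPeval : ∀ t s : ℝ, MvPolynomial.eval ![t, s] P =
      ∑ r : Fin d → Fin 3, (∫ x in Ω, D r x) * ∏ i, ![(1:ℝ), t, s] (r i) := by
    intro t s
    rw [hP, map_sum]
    refine Finset.sum_congr rfl fun r _ => ?_
    rw [MvPolynomial.smul_eval, map_prod]
    congr 1
    refine Finset.prod_congr rfl fun i _ => ?_
    have : ∀ k : Fin 3, MvPolynomial.eval ![t, s]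
        (![(1 : MvPolynomial (Fin 2) ℝ), MvPolynomial.X 0, MvPolynomial.X 1] k)
        = ![(1:ℝ), t, s] k := by
      intro k
      fin_cases k <;> simp
    exact this (r i)
  have hInt : ∀ t s : ℝ, (∫ x in Ω, LinearMap.det
      ((LinearMap.id : EuclideanSpace ℝ (Fin d) →ₗ[ℝ] EuclideanSpace ℝ (Fin d))
        + t • (fderiv ℝ η x).toLinearMap + s • (fderiv ℝ ξ x).toLinearMap))
      = MvPolynomial.eval ![t, s] P := by
    intro t s
    rw [hPeval]
    have hpt : ∀ x : EuclideanSpace ℝ (Fin d), LinearMap.det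
        ((LinearMap.id : EuclideanSpace ℝ (Fin d) →ₗ[ℝ] EuclideanSpace ℝ (Fin d))
          + t • (fderiv ℝ η x).toLinearMap + s • (fderiv ℝ ξ x).toLinearMap)
        = ∑ r : Fin d → Fin 3, (∏ i, ![(1:ℝ), t, s] (r i)) * D r x :=
      fun x => (hdet t s x).trans (hexp t s x)
    calc (∫ x in Ω, LinearMap.det
        ((LinearMap.id : EuclideanSpace ℝ (Fin d) →ₗ[ℝ] EuclideanSpace ℝ (Fin d))
          + t • (fderiv ℝ η x).toLinearMap + s • (fderiv ℝ ξ x).toLinearMap))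
        = ∫ x in Ω, ∑ r : Fin d → Fin 3, (∏ i, ![(1:ℝ), t, s] (r i)) * D r x := by
          exact integral_congr_ae (Filter.Eventually.of_forall fun x => hpt x)
      _ = ∑ r : Fin d → Fin 3, ∫ x in Ω, (∏ i, ![(1:ℝ), t, s] (r i)) * D r x :=
          integral_finset_sum _ fun r _ => (intD r).const_mul _
      _ = ∑ r : Fin d → Fin 3, (∫ x in Ω, D r x) * ∏ i, ![(1:ℝ), t, s] (r i) := by
          refine Finset.sum_congr rfl fun r _ => ?_
          rw [integral_const_mul, mul_comm]
  -- part 1 : change of variables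
  have key1 : ∀ t s : ℝ, |t| * L + |s| * M < 1 →
      (volume ((fun x => x + t • η x + s • ξ x) '' Ω)).toReal =
        ∫ x in Ω, LinearMap.det
          ((LinearMap.id : EuclideanSpace ℝ (Fin d) →ₗ[ℝ] EuclideanSpace ℝ (Fin d))
            + t • (fderiv ℝ η x).toLinearMap + s • (fderiv ℝ ξ x).toLinearMap) := by
    intro t s hts
    set f' : EuclideanSpace ℝ (Fin d) → EuclideanSpace ℝ (Fin d) →L[ℝ] EuclideanSpace ℝ (Fin d) :=
      fun x => ContinuousLinearMap.id ℝ _ + t • fderiv ℝ η x + s • fderiv ℝ ξ x with hf'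
    have hCn : ∀ x, ‖t • fderiv ℝ η x + s • fderiv ℝ ξ x‖ < 1 := by
      intro x
      calc ‖t • fderiv ℝ η x + s • fderiv ℝ ξ x‖
          ≤ ‖t • fderiv ℝ η x‖ + ‖s • fderiv ℝ ξ x‖ := norm_add_le _ _
        _ ≤ |t| * L + |s| * M := by
            rw [norm_smul, norm_smul, Real.norm_eq_abs, Real.norm_eq_abs]
            exact add_le_add (mul_le_mul_of_nonneg_left (hLb x) (abs_nonneg t))
              (mul_le_mul_of_nonneg_left (hMb x) (abs_nonneg s))
        _ < 1 := hts
    have hpos : ∀ x, 0 < LinearMap.det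
        ((f' x : EuclideanSpace ℝ (Fin d) →L[ℝ] EuclideanSpace ℝ (Fin d)) :
          EuclideanSpace ℝ (Fin d) →ₗ[ℝ] EuclideanSpace ℝ (Fin d)) := by
      intro x
      have haux := aux_det_pos (t • fderiv ℝ η x + s • fderiv ℝ ξ x) (hCn x)
      have heq : f' x = 1 + (t • fderiv ℝ η x + s • fderiv ℝ ξ x) := by
        simp only [hf']
        rw [ContinuousLinearMap.one_def, add_assoc]
      rw [heq]
      exact haux
    have hf'cont : Continuous f' := by
      rw [hf']
      exact (continuous_const.add (contDη.const_smul t)).add (contDξ.const_smul s)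
    have hdetcont : Continuous fun x => (f' x).det := by
      have hdeq : (fun x => (f' x).det) = fun x => Matrix.det (φ (f' x)) := by
        funext x
        rw [show (f' x).det = LinearMap.det
          ((f' x : EuclideanSpace ℝ (Fin d) →L[ℝ] EuclideanSpace ℝ (Fin d)) :
            EuclideanSpace ℝ (Fin d) →ₗ[ℝ] EuclideanSpace ℝ (Fin d)) from rfl,
          ← LinearMap.det_toMatrix b]
        rfl
      rw [hdeq]
      exact (φ.continuous_of_finiteDimensional.comp hf'cont).matrix_det
    have hfd : ∀ x, HasFDerivAt (fun y => y + t • η y + s • ξ y) (f' x) x := by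
      intro x
      have h1 : HasFDerivAt (fun y : EuclideanSpace ℝ (Fin d) => y)
          (ContinuousLinearMap.id ℝ (EuclideanSpace ℝ (Fin d))) x := hasFDerivAt_id x
      have h2 := ((hdiffη x).hasFDerivAt).const_smul t
      have h3 := ((hdiffξ x).hasFDerivAt).const_smul s
      exact (h1.add h2).add h3
    have hinj : Function.Injective (fun y => y + t • η y + s • ξ y) := by
      intro x y hxy
      simp only at hxy
      have hgd : ∀ z, DifferentiableAt ℝ (fun w => t • η w + s • ξ w) z := fun z =>
        ((hdiffη z).const_smul t).add ((hdiffξ z).const_smul s)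
      have hgb : ∀ z, ‖fderiv ℝ (fun w => t • η w + s • ξ w) z‖ ≤ |t| * L + |s| * M := by
        intro z
        have hfz : fderiv ℝ (fun w => t • η w + s • ξ w) z
            = t • fderiv ℝ η z + s • fderiv ℝ ξ z := by
          rw [fderiv_fun_add ((hdiffη z).fun_const_smul t) ((hdiffξ z).fun_const_smul s),
            fderiv_fun_const_smul (hdiffη z), fderiv_fun_const_smul (hdiffξ z)]
        rw [hfz]
        calc ‖t • fderiv ℝ η z + s • fderiv ℝ ξ z‖
            ≤ ‖t • fderiv ℝ η z‖ + ‖s • fderiv ℝ ξ z‖ := norm_add_le _ _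
          _ ≤ |t| * L + |s| * M := by
              rw [norm_smul, norm_smul, Real.norm_eq_abs, Real.norm_eq_abs]
              exact add_le_add (mul_le_mul_of_nonneg_left (hLb z) (abs_nonneg t))
                (mul_le_mul_of_nonneg_left (hMb z) (abs_nonneg s))
      have hk := convex_univ.norm_image_sub_le_of_norm_fderiv_le
        (fun z _ => hgd z) (fun z _ => hgb z) (Set.mem_univ x) (Set.mem_univ y)
      have hsub : x - y = (t • η y + s • ξ y) - (t • η x + s • ξ x) := by
        rw [sub_eq_sub_iff_add_eq_add]
        have h3 : x + (t • η x + s • ξ x) = y + (t • η y + s • ξ y) := by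
          simpa [add_assoc] using hxy
        rw [h3, add_comm]
      have hnorm : ‖x - y‖ ≤ (|t| * L + |s| * M) * ‖x - y‖ := by
        calc ‖x - y‖ = ‖(t • η y + s • ξ y) - (t • η x + s • ξ x)‖ := by rw [hsub]
          _ ≤ (|t| * L + |s| * M) * ‖y - x‖ := hk
          _ = (|t| * L + |s| * M) * ‖x - y‖ := by rw [norm_sub_rev]
      have hzero : ‖x - y‖ = 0 := by nlinarith [norm_nonneg (x - y)]
      exact sub_eq_zero.mp (norm_eq_zero.mp hzero)
    have hcv := lintegral_abs_det_fderiv_eq_addHaar_image volume hΩ.measurableSet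
      (fun x _ => (hfd x).hasFDerivWithinAt) hinj.injOn
    rw [← hcv]
    have hlin : ((∫⁻ x in Ω, ENNReal.ofReal |(f' x).det| ∂volume)).toReal
        = ∫ x in Ω, |(f' x).det| := by
      rw [integral_eq_lintegral_of_nonneg_ae
        (Filter.Eventually.of_forall fun x => abs_nonneg _)
        (hdetcont.abs.aestronglyMeasurable)]
    rw [hlin]
    refine integral_congr_ae (Filter.Eventually.of_forall fun x => ?_)
    show |(f' x).det| = LinearMap.det
      ((LinearMap.id : EuclideanSpace ℝ (Fin d) →ₗ[ℝ] EuclideanSpace ℝ (Fin d))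
        + t • (fderiv ℝ η x).toLinearMap + s • (fderiv ℝ ξ x).toLinearMap)
    have habs : |(f' x).det| = (f' x).det := abs_of_pos (hpos x)
    rw [habs]
    show LinearMap.det
      ((f' x : EuclideanSpace ℝ (Fin d) →L[ℝ] EuclideanSpace ℝ (Fin d)) :
        EuclideanSpace ℝ (Fin d) →ₗ[ℝ] EuclideanSpace ℝ (Fin d)) = _
    simp only [hf', ContinuousLinearMap.coe_add, ContinuousLinearMap.coe_smul,
      ContinuousLinearMap.coe_id]
  -- smoothness of polynomial evaluation
  have hcd : ∀ Q : MvPolynomial (Fin 2) ℝ,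
      ContDiff ℝ (⊤ : ℕ∞) fun p : ℝ × ℝ => MvPolynomial.eval ![p.1, p.2] Q := by
    intro Q
    induction Q using MvPolynomial.induction_on with
    | C a => simpa using contDiff_const
    | add p q hp hq => simpa [map_add] using hp.add hq
    | mul_X p n hp =>
      simp only [map_mul, MvPolynomial.eval_X]
      refine hp.mul ?_
      fin_cases n
      · simpa using contDiff_fst
      · simpa using contDiff_snd
  refine ⟨key1, ⟨P, hPdeg, fun t s hts => (key1 t s hts).trans (hInt t s)⟩, ?_⟩
  refine ContDiffOn.congr ((hcd P).contDiffOn) ?_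
  intro p hp
  exact (key1 p.1 p.2 hp).trans (hInt p.1 p.2)
end

section
/- Let Ω ⊆ ℝ^d be an open set of finite Lebesgue measure, let η ∈ C_c^∞(ℝ^d;ℝ^d), and let Φ be the flow of η. Then the function t ↦ |Φ_t(Ω)| is differentiable at t = 0 and (d/dt)|_{t=0} |Φ_t(Ω)| = ∫_Ω div η(x) dx. -/
open MeasureTheory

open Set


section Det

variable {d : ℕ}

local notation "E" => EuclideanSpace ℝ (Fin d)

lemma contDiff_finsetProd {α G : Type*} [NormedAddCommGroup G] [NormedSpace ℝ G]
    {n : WithTop ℕ∞} {f : α → G → ℝ} (s : Finset α) (h : ∀ i ∈ s, ContDiff ℝ n (f i)) :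
    ContDiff ℝ n (fun x => ∏ i ∈ s, f i x) := by
  classical
  induction s using Finset.induction with
  | empty => simpa using contDiff_const
  | insert _ _ hx ih =>
      rename_i a s
      simp only [Finset.prod_insert hx]
      exact (h a (Finset.mem_insert_self a s)).mul
        (ih fun i hi => h i (Finset.mem_insert_of_mem hi))

lemma contDiff_det_pi : ContDiff ℝ ((⊤ : ℕ∞) : WithTop ℕ∞)
    (fun M : Fin d → Fin d → ℝ => Matrix.det (Matrix.of M)) := by
  have : (fun M : Fin d → Fin d → ℝ => Matrix.det (Matrix.of M)) =
      fun M : Fin d → Fin d → ℝ =>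
        ∑ σ : Equiv.Perm (Fin d), (Equiv.Perm.sign σ : ℤ) • ∏ i, M (σ i) i := by
    funext M
    rw [Matrix.det_apply]
    rfl
  rw [this]
  apply ContDiff.sum
  intro σ _
  apply ContDiff.const_smul
  apply contDiff_finsetProd
  intro i _
  exact (((ContinuousLinearMap.proj i).comp
    (ContinuousLinearMap.proj (R := ℝ) (φ := fun _ : Fin d => Fin d → ℝ) (σ i))).contDiff)

noncomputable def bE (d : ℕ) : Module.Basis (Fin d) ℝ (EuclideanSpace ℝ (Fin d)) :=
  (EuclideanSpace.basisFun (Fin d) ℝ).toBasis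

noncomputable def entriesL (d : ℕ) :
    (EuclideanSpace ℝ (Fin d) →L[ℝ] EuclideanSpace ℝ (Fin d)) →ₗ[ℝ] (Fin d → Fin d → ℝ) where
  toFun L := fun i j => LinearMap.toMatrix (bE d) (bE d) L.toLinearMap i j
  map_add' L₁ L₂ := by funext i j; simp [Matrix.add_apply]
  map_smul' c L := by funext i j; simp [Matrix.smul_apply]

noncomputable def detE (L : E →L[ℝ] E) : ℝ :=
  Matrix.det (LinearMap.toMatrix (bE d) (bE d) L.toLinearMap)

lemma detE_eq (L : E →L[ℝ] E) : detE L = ContinuousLinearMap.det L := by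
  rw [ContinuousLinearMap.det]
  exact LinearMap.det_toMatrix _ _

lemma detE_one : detE (1 : E →L[ℝ] E) = 1 := by
  rw [detE_eq]; simp [ContinuousLinearMap.det, ContinuousLinearMap.one_def, ContinuousLinearMap.coe_id, LinearMap.det_id]

lemma contDiff_detE : ContDiff ℝ ((⊤ : ℕ∞) : WithTop ℕ∞) (detE (d := d)) := by
  have h1 : ContDiff ℝ ((⊤ : ℕ∞) : WithTop ℕ∞) (fun L : E →L[ℝ] E => entriesL d L) :=
    (LinearMap.toContinuousLinearMap (entriesL d)).contDiff
  have := contDiff_det_pi.comp h1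
  convert this using 1
  funext L; rfl

end Det

section Det2

variable {d : ℕ}

local notation "E" => EuclideanSpace ℝ (Fin d)

lemma differentiable_detE : Differentiable ℝ (detE (d := d)) :=
  contDiff_detE.differentiable (by simp)

lemma fderiv_detE_one (B : E →L[ℝ] E) :
    fderiv ℝ detE (1 : E →L[ℝ] E) B = LinearMap.trace ℝ E B.toLinearMap := by
  set M := LinearMap.toMatrix (bE d) (bE d) B.toLinearMap with hM
  have hline : HasDerivAt (fun r : ℝ => (1 : E →L[ℝ] E) + r • B) B 0 := by
    simpa using ((hasDerivAt_id (0:ℝ)).smul_const B).const_add (1 : E →L[ℝ] E)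
  have h1 : HasDerivAt (fun r : ℝ => detE ((1 : E →L[ℝ] E) + r • B))
      (fderiv ℝ detE (1 : E →L[ℝ] E) B) 0 := by
    have := (differentiable_detE ((1 : E →L[ℝ] E) + (0:ℝ) • B)).hasFDerivAt.comp_hasDerivAt
      (0:ℝ) hline
    have h0 : ((1 : E →L[ℝ] E) + (0:ℝ) • B) = 1 := by ext v; simp
    rw [h0] at this
    exact this
  have key : ∀ r : ℝ, detE ((1 : E →L[ℝ] E) + r • B) = Matrix.det (1 + r • M) := by
    intro r
    rw [detE]
    congr 1
    rw [ContinuousLinearMap.coe_add, ContinuousLinearMap.coe_smul, map_add, _root_.map_smul,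
      ContinuousLinearMap.one_def, ContinuousLinearMap.coe_id, LinearMap.toMatrix_id]
  set e := (Matrix.det (1 + (Polynomial.X : Polynomial ℝ) • M.map Polynomial.C)).divX.divX
    with he
  have key2 : ∀ r : ℝ, detE ((1 : E →L[ℝ] E) + r • B)
      = 1 + Matrix.trace M * r + e.eval r * r ^ 2 := by
    intro r
    rw [key r, Matrix.det_one_add_smul]
  have h2 : HasDerivAt (fun r : ℝ => detE ((1 : E →L[ℝ] E) + r • B)) (Matrix.trace M) 0 := by
    have h3 : HasDerivAt (fun r : ℝ => 1 + Matrix.trace M * r + e.eval r * r ^ 2)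
        (Matrix.trace M) 0 := by
      have ha : HasDerivAt (fun r : ℝ => 1 + Matrix.trace M * r) (Matrix.trace M) 0 := by
        simpa using ((hasDerivAt_id (0:ℝ)).const_mul (Matrix.trace M)).const_add 1
      have hb : HasDerivAt (fun r : ℝ => e.eval r * r ^ 2) 0 0 := by
        exact ((e.hasDerivAt (0:ℝ)).fun_mul (hasDerivAt_pow 2 (0:ℝ))).congr_deriv (by simp)
      exact (ha.fun_add hb).congr_deriv (by simp)
    apply h3.congr_of_eventuallyEq
    exact Filter.Eventually.of_forall fun r => (key2 r)
  have := h1.unique h2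
  rw [this, hM, LinearMap.trace_eq_matrix_trace ℝ (bE d) B.toLinearMap]

lemma hasDerivAt_detE {N : ℝ → (E →L[ℝ] E)} {N' : E →L[ℝ] E}
    (hN : HasDerivAt N N' 0) (h1 : N 0 = 1) :
    HasDerivAt (fun t => detE (N t)) (LinearMap.trace ℝ E N'.toLinearMap) 0 := by
  have := (differentiable_detE (N 0)).hasFDerivAt.comp_hasDerivAt (0:ℝ) hN
  rw [h1] at this
  rwa [fderiv_detE_one] at this

end Det2


section Main

variable {d : ℕ}

local notation "E" => EuclideanSpace ℝ (Fin d)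

theorem flow_main (Ω : Set E) (hΩ : IsOpen Ω) (hvol : volume Ω < ⊤)
    (η : E → E) (hη : ContDiff ℝ (⊤ : ℕ∞) η) (hηc : HasCompactSupport η)
    (Φ : ℝ → E → E) (hΦ : ContDiff ℝ (⊤ : ℕ∞) (fun p : ℝ × E => Φ p.1 p.2))
    (hΦ0 : ∀ x, Φ 0 x = x)
    (hΦt : ∀ t x, HasDerivAt (fun s => Φ s x) (η (Φ t x)) t) :
    HasDerivAt (fun t : ℝ => (volume (Φ t '' Ω)).toReal)
      (∫ x in Ω, LinearMap.trace ℝ (EuclideanSpace ℝ (Fin d)) (fderiv ℝ η x).toLinearMap) 0 := by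
  classical
  -- Lipschitz constant for η
  obtain ⟨C, hC⟩ := hη.lipschitzWith_of_hasCompactSupport hηc (by simp)
  -- uniqueness of solutions
  have huniq : ∀ (f g : ℝ → E), (∀ t, HasDerivAt f (η (f t)) t) →
      (∀ t, HasDerivAt g (η (g t)) t) → ∀ t₀, f t₀ = g t₀ → ∀ t, f t = g t := by
    intro f g hf hg t₀ heq t
    have hmem : ∀ u : ℝ, u ∈ Set.Ioo (-(|t| + |t₀| + 1)) (|t| + |t₀| + 1) →
        True := fun _ _ => trivial
    have ht₀ : t₀ ∈ Set.Ioo (-(|t| + |t₀| + 1)) (|t| + |t₀| + 1) := by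
      constructor <;> cases' abs_cases t₀ with h h <;> cases' abs_cases t with h' h' <;> linarith
    have ht : t ∈ Set.Ioo (-(|t| + |t₀| + 1)) (|t| + |t₀| + 1) := by
      constructor <;> cases' abs_cases t₀ with h h <;> cases' abs_cases t with h' h' <;> linarith
    exact ODE_solution_unique_of_mem_Ioo (v := fun _ => η) (s := fun _ => Set.univ) (K := C)
      (fun _ _ => fun x _ y _ => hC x y) ht₀
      (fun u _ => ⟨hf u, trivial⟩) (fun u _ => ⟨hg u, trivial⟩) heq ht
  -- injectivity of the flow maps
  have hinj : ∀ t, Function.Injective (Φ t) := by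
    intro t x y hxy
    have := huniq (fun s => Φ s x) (fun s => Φ s y) (fun s => hΦt s x) (fun s => hΦt s y)
      t hxy 0
    rwa [hΦ0, hΦ0] at this
  -- the flow fixes points outside the support of η
  have hfix : ∀ x, x ∉ tsupport η → ∀ t, Φ t x = x := by
    intro x hx t
    have hzero : η x = 0 := image_eq_zero_of_notMem_tsupport hx
    exact huniq (fun s => Φ s x) (fun _ => x) (fun s => hΦt s x)
      (fun s => by simpa [hzero] using (hasDerivAt_const s x)) 0 (hΦ0 x) t
  -- the space derivative of the flow
  set A : ℝ → E → (E →L[ℝ] E) := fun t x => fderiv ℝ (fun y => Φ t y) x with hAdef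
  have hApart : ∀ t, ContDiff ℝ ((⊤ : ℕ∞) : WithTop ℕ∞) (fun y => Φ t y) := by
    intro t
    exact hΦ.comp ((contDiff_const (c := t)).prodMk contDiff_id)
  have hAd : ∀ t x, HasFDerivAt (fun y => Φ t y) (A t x) x := fun t x =>
    (((hApart t).differentiable (by simp)) x).hasFDerivAt
  have hA : ContDiff ℝ ((⊤ : ℕ∞) : WithTop ℕ∞) (fun p : ℝ × E => A p.1 p.2) := by
    apply ContDiff.fderiv (f := fun (p : ℝ × E) (y : E) => Φ p.1 y) (g := Prod.snd)
      (m := ((⊤ : ℕ∞) : WithTop ℕ∞))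
    · exact hΦ.comp ((contDiff_fst.fst).prodMk contDiff_snd)
    · exact contDiff_snd
    · exact_mod_cast le_top
  have hA0 : ∀ x : E, A 0 x = (1 : E →L[ℝ] E) := by
    intro x
    have hid : (fun y => Φ 0 y) = id := funext hΦ0
    rw [hAdef]
    simp only [hid, fderiv_id]
    rfl
  have hAout : ∀ (t : ℝ) (x : E), x ∉ tsupport η → A t x = (1 : E →L[ℝ] E) := by
    intro t x hx
    have hev : (fun y => Φ t y) =ᶠ[nhds x] id := by
      apply Filter.eventuallyEq_of_mem
        (((isClosed_tsupport η).isOpen_compl).mem_nhds hx)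
      intro y hy
      exact hfix y hy t
    rw [hAdef]
    simp only [hev.fderiv_eq, fderiv_id]
    rfl
  -- the determinant function
  set g : ℝ × E → ℝ := fun p => detE (A p.1 p.2) with hgdef
  have hg : ContDiff ℝ ((⊤ : ℕ∞) : WithTop ℕ∞) g := contDiff_detE.comp hA
  have hgd : Differentiable ℝ g := hg.differentiable (by simp)
  set F' : ℝ → E → ℝ := fun t x => fderiv ℝ g (t, x) ((1 : ℝ), (0 : E)) with hF'def
  have hdiff : ∀ (t : ℝ) (x : E), HasDerivAt (fun s => g (s, x)) (F' t x) t := by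
    intro t x
    have h1 : HasDerivAt (fun s : ℝ => (s, x)) ((1 : ℝ), (0 : E)) t :=
      (hasDerivAt_id t).prodMk (hasDerivAt_const t x)
    exact (hgd (t, x)).hasFDerivAt.comp_hasDerivAt t h1
  have hF'cont : Continuous (fun p : ℝ × E => F' p.1 p.2) := by
    have h1 : Continuous (fderiv ℝ g) := hg.continuous_fderiv (by simp)
    exact (ContinuousLinearMap.apply ℝ ℝ ((1 : ℝ), (0 : E))).continuous.comp h1
  -- identify F' 0 x with the divergence
  have hF'0 : ∀ x : E, F' 0 x =
      LinearMap.trace ℝ (EuclideanSpace ℝ (Fin d)) (fderiv ℝ η x).toLinearMap := by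
    intro x
    set G : ℝ × E → E := fun p => Φ p.1 p.2 with hGdef
    have hGc : ContDiff ℝ ((⊤ : ℕ∞) : WithTop ℕ∞) G := hΦ
    have hGd : Differentiable ℝ G := hGc.differentiable (by simp)
    set DG : ℝ × E → ((ℝ × E) →L[ℝ] E) := fderiv ℝ G with hDGdef
    have hDGc : ContDiff ℝ ((⊤ : ℕ∞) : WithTop ℕ∞) DG :=
      hGc.fderiv_right (by exact_mod_cast le_top)
    have hDGd : Differentiable ℝ DG := hDGc.differentiable (by simp)
    have claim1 : ∀ (t : ℝ) (y : E),
        A t y = (DG (t, y)).comp (ContinuousLinearMap.inr ℝ ℝ E) := by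
      intro t y
      have h2 : HasFDerivAt (fun z : E => ((t : ℝ), z)) (ContinuousLinearMap.inr ℝ ℝ E) y :=
        hasFDerivAt_prodMk_right t y
      have h3 : HasFDerivAt (fun z : E => Φ t z)
          ((DG (t, y)).comp (ContinuousLinearMap.inr ℝ ℝ E)) y :=
        (hGd (t, y)).hasFDerivAt.comp y h2
      exact (hAd t y).unique h3
    have claim2 : ∀ p : ℝ × E, DG p ((1 : ℝ), (0 : E)) = η (G p) := by
      intro p
      have h1 : HasDerivAt (fun s => G (s, p.2)) (DG (p.1, p.2) ((1 : ℝ), (0 : E))) p.1 :=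
        (hGd (p.1, p.2)).hasFDerivAt.comp_hasDerivAt (l := G) p.1
          ((hasDerivAt_id p.1).prodMk (hasDerivAt_const p.1 p.2))
      exact h1.unique (hΦt p.1 p.2)
    set W : (ℝ × E) →L[ℝ] E := fderiv ℝ DG (0, x) ((1 : ℝ), (0 : E)) with hWdef
    have hasA : HasDerivAt (fun t => A t x) (W.comp (ContinuousLinearMap.inr ℝ ℝ E)) 0 := by
      have hcurve : HasDerivAt (fun t : ℝ => DG (t, x)) W 0 :=
        (hDGd (0, x)).hasFDerivAt.comp_hasDerivAt 0
          ((hasDerivAt_id 0).prodMk (hasDerivAt_const 0 x))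
      have hcomp := hcurve.clm_comp (hasDerivAt_const (0 : ℝ) (ContinuousLinearMap.inr ℝ ℝ E))
      simp only [ContinuousLinearMap.comp_zero, add_zero] at hcomp
      exact hcomp.congr_of_eventuallyEq (Filter.Eventually.of_forall fun t => claim1 t x)
    have hsymm : IsSymmSndFDerivAt ℝ G (0, x) :=
      (hGc.contDiffAt).isSymmSndFDerivAt (by rw [minSmoothness_of_isRCLikeNormedField]; exact (WithTop.coe_le_coe).2 le_top)
    have hfun : (fun p : ℝ × E => DG p ((1 : ℝ), (0 : E))) = fun p => η (G p) :=
      funext claim2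
    have stepb : HasFDerivAt (fun p : ℝ × E => DG p ((1 : ℝ), (0 : E)))
        ((ContinuousLinearMap.apply ℝ E ((1 : ℝ), (0 : E))).comp (fderiv ℝ DG (0, x)))
        (0, x) :=
      (ContinuousLinearMap.apply ℝ E ((1 : ℝ), (0 : E))).hasFDerivAt.comp _
        (hDGd (0, x)).hasFDerivAt
    have stepa : HasFDerivAt (fun p : ℝ × E => η (G p))
        ((fderiv ℝ η x).comp (DG (0, x))) (0, x) := by
      have hx0 : G (0, x) = x := hΦ0 x
      have h1 : HasFDerivAt η (fderiv ℝ η (G (0, x))) (G (0, x)) :=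
        ((hη.differentiable (by simp)) _).hasFDerivAt
      have h2 := h1.comp (0, x) (hGd (0, x)).hasFDerivAt
      rwa [hx0] at h2
    have hkey := (hfun ▸ stepb).unique stepa
    have heq2 : ∀ w : ℝ × E,
        fderiv ℝ DG (0, x) w ((1 : ℝ), (0 : E)) = (fderiv ℝ η x) (DG (0, x) w) := by
      intro w
      have := ContinuousLinearMap.ext_iff.1 hkey w
      exact this
    have hderivA : HasDerivAt (fun t => A t x) (fderiv ℝ η x) 0 := by
      convert hasA using 1
      ext v
      have h1 : (W.comp (ContinuousLinearMap.inr ℝ ℝ E)) v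
          = fderiv ℝ DG (0, x) ((1 : ℝ), (0 : E)) ((0 : ℝ), v) := by
        rw [hWdef]
        rfl
      have h2 : fderiv ℝ DG (0, x) ((1 : ℝ), (0 : E)) ((0 : ℝ), v)
          = fderiv ℝ DG (0, x) ((0 : ℝ), v) ((1 : ℝ), (0 : E)) := by
        rw [hDGdef]
        exact hsymm _ _
      have h3 := heq2 ((0 : ℝ), v)
      have h4 : DG (0, x) ((0 : ℝ), v) = A 0 x v := by
        rw [claim1 0 x]
        rfl
      rw [h1, h2, h3, h4, hA0 x]
      rfl
    have hdet : HasDerivAt (fun t => detE (A t x))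
        (LinearMap.trace ℝ (EuclideanSpace ℝ (Fin d)) (fderiv ℝ η x).toLinearMap) 0 :=
      hasDerivAt_detE hderivA (hA0 x)
    exact (hdiff 0 x).unique hdet
  -- F' vanishes off the support
  have hgout : ∀ (t : ℝ) (x : E), x ∉ tsupport η → g (t, x) = 1 := by
    intro t x hx
    rw [hgdef]
    simp only [hAout t x hx]
    exact detE_one
  have hg0 : ∀ x : E, g (0, x) = 1 := by
    intro x
    rw [hgdef]
    simp only [hA0 x]
    exact detE_one
  have hF'out : ∀ (t : ℝ) (x : E), x ∉ tsupport η → F' t x = 0 := by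
    intro t x hx
    have hev : g =ᶠ[nhds (t, x)] (fun _ => (1 : ℝ)) := by
      have hs : (Set.univ ×ˢ (tsupport η)ᶜ : Set (ℝ × E)) ∈ nhds (t, x) :=
        prod_mem_nhds Filter.univ_mem (((isClosed_tsupport η).isOpen_compl).mem_nhds hx)
      apply Filter.eventuallyEq_of_mem hs
      rintro ⟨s, y⟩ ⟨-, hy⟩
      exact hgout s y hy
    rw [hF'def]
    simp only [hev.fderiv_eq, fderiv_fun_const]
    rfl
  -- bound on a compact neighborhood
  obtain ⟨C₀, hC₀⟩ : ∃ C₀, ∀ p ∈ (Set.Icc (-1 : ℝ) 1) ×ˢ tsupport η,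
      ‖F' p.1 p.2‖ ≤ C₀ := by
    apply ((isCompact_Icc).prod hηc).exists_bound_of_continuousOn
    exact hF'cont.continuousOn
  -- positivity radius
  obtain ⟨ε, hε0, hε1, hεpos⟩ : ∃ ε : ℝ, 0 < ε ∧ ε ≤ 1 ∧
      ∀ t ∈ Metric.ball (0 : ℝ) ε, ∀ x : E, 0 < g (t, x) := by
    set S : Set (ℝ × E) := ((Set.Icc (-1 : ℝ) 1) ×ˢ tsupport η) ∩ g ⁻¹' (Set.Iic (1/2))
      with hSdef
    have hScomp : IsCompact S :=
      ((isCompact_Icc).prod hηc).inter_right ((isClosed_Iic).preimage hg.continuous)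
    have hT : IsCompact (Prod.fst '' S) := hScomp.image continuous_fst
    have h0T : (0 : ℝ) ∉ Prod.fst '' S := by
      rintro ⟨⟨t, x⟩, hp, ht0⟩
      simp only at ht0
      subst ht0
      have h1 : g (0, x) ≤ 1/2 := hp.2
      rw [hg0 x] at h1
      norm_num at h1
    obtain ⟨ε₀, hε₀pos, hball⟩ := Metric.isOpen_iff.1 hT.isClosed.isOpen_compl 0 h0T
    refine ⟨min ε₀ 1, by positivity, min_le_right _ _, ?_⟩
    intro t ht x
    by_cases hx : x ∈ tsupport η
    · have ht1 : |t| < min ε₀ 1 := by rwa [Metric.mem_ball, Real.dist_eq, sub_zero] at ht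
      have ht2 : |t| ≤ 1 := le_of_lt (lt_of_lt_of_le ht1 (min_le_right _ _))
      have htI : t ∈ Set.Icc (-1 : ℝ) 1 := abs_le.1 ht2
      have hnotS : (t, x) ∉ S := by
        intro hmem
        have hmemT : t ∈ Prod.fst '' S := ⟨(t, x), hmem, rfl⟩
        refine hball ?_ hmemT
        rw [Metric.mem_ball, Real.dist_eq, sub_zero]
        exact lt_of_lt_of_le ht1 (min_le_left _ _)
      have hgt : ¬ (g (t, x) ≤ 1/2) := fun hle => hnotS ⟨⟨htI, hx⟩, hle⟩
      linarith [not_le.1 hgt]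
    · rw [hgout t x hx]; norm_num
  -- change of variables
  have hcov : ∀ t ∈ Metric.ball (0 : ℝ) ε,
      (volume (Φ t '' Ω)).toReal = ∫ x in Ω, g (t, x) := by
    intro t ht
    have hpos : ∀ x : E, 0 < g (t, x) := hεpos t ht
    have h1 : (∫⁻ x in Ω, ENNReal.ofReal |(A t x).det| ∂volume) = volume (Φ t '' Ω) :=
      lintegral_abs_det_fderiv_eq_addHaar_image volume hΩ.measurableSet
        (fun x _ => (hAd t x).hasFDerivWithinAt) ((hinj t).injOn)
    have h2 : ∀ x : E, ENNReal.ofReal |(A t x).det| = ENNReal.ofReal (g (t, x)) := by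
      intro x
      have hd : (A t x).det = g (t, x) := by
        rw [hgdef]
        exact (detE_eq (A t x)).symm
      rw [hd, abs_of_pos (hpos x)]
    have h3 : ∫ x in Ω, g (t, x) = (∫⁻ x in Ω, ENNReal.ofReal (g (t, x))).toReal :=
      integral_eq_lintegral_of_nonneg_ae (Filter.Eventually.of_forall fun x => (hpos x).le)
        ((hg.continuous.comp (continuous_const.prodMk continuous_id)).aestronglyMeasurable)
    rw [h3]
    congr 1
    rw [← h1]
    exact lintegral_congr fun x => h2 x
  -- differentiation under the integral sign
  haveI : IsFiniteMeasure (volume.restrict Ω) :=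
    ⟨by rwa [Measure.restrict_apply_univ]⟩
  have main : HasDerivAt (fun t => ∫ x in Ω, g (t, x)) (∫ x in Ω, F' 0 x) 0 := by
    have h := hasDerivAt_integral_of_dominated_loc_of_deriv_le (μ := volume.restrict Ω)
      (F := fun t x => g (t, x)) (F' := F') (x₀ := (0 : ℝ))
      (bound := fun _ => max C₀ 0) (Metric.ball_mem_nhds 0 hε0)
      (Filter.Eventually.of_forall fun t =>
        ((hg.continuous.comp (continuous_const.prodMk continuous_id)).aestronglyMeasurable))
      ((integrable_const (1 : ℝ)).congr
        (Filter.Eventually.of_forall fun x => (hg0 x).symm))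
      ((hF'cont.comp (continuous_const.prodMk continuous_id)).aestronglyMeasurable)
      (Filter.Eventually.of_forall ?_) (integrable_const _)
      (Filter.Eventually.of_forall fun x t _ => hdiff t x)
    · exact h.2
    · intro x t ht
      by_cases hx : x ∈ tsupport η
      · refine le_trans (hC₀ (t, x) ⟨?_, hx⟩) (le_max_left _ _)
        have := Metric.mem_ball.1 ht
        rw [Real.dist_eq, sub_zero] at this
        constructor <;> cases' abs_cases t with h h <;> linarith
      · rw [hF'out t x hx]
        simp
  have main2 : HasDerivAt (fun t => ∫ x in Ω, g (t, x))
      (∫ x in Ω, LinearMap.trace ℝ (EuclideanSpace ℝ (Fin d)) (fderiv ℝ η x).toLinearMap) 0 := by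
    have him : (∫ x in Ω, F' 0 x) =
        ∫ x in Ω, LinearMap.trace ℝ (EuclideanSpace ℝ (Fin d)) (fderiv ℝ η x).toLinearMap :=
      integral_congr_ae (Filter.Eventually.of_forall fun x => hF'0 x)
    rw [← him]
    exact main
  exact main2.congr_of_eventuallyEq
    (Filter.eventually_of_mem (Metric.ball_mem_nhds 0 hε0) hcov)

end Main

theorem stmt_3 {d : ℕ} (Ω : Set (EuclideanSpace ℝ (Fin d))) (hΩ : IsOpen Ω)
    (hvol : volume Ω < ⊤)
    (η : EuclideanSpace ℝ (Fin d) → EuclideanSpace ℝ (Fin d))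
    (hη : ContDiff ℝ (⊤ : ℕ∞) η) (hηc : HasCompactSupport η)
    (Φ : ℝ → EuclideanSpace ℝ (Fin d) → EuclideanSpace ℝ (Fin d))
    (hΦ : ContDiff ℝ (⊤ : ℕ∞) (fun p : ℝ × EuclideanSpace ℝ (Fin d) => Φ p.1 p.2))
    (hΦ0 : ∀ x, Φ 0 x = x)
    (hΦt : ∀ t x, HasDerivAt (fun s => Φ s x) (η (Φ t x)) t) :
    HasDerivAt (fun t : ℝ => (volume (Φ t '' Ω)).toReal) (∫ x in Ω, vdiv η x) 0 := by
  have h := flow_main Ω hΩ hvol η hη hηc Φ hΦ hΦ0 hΦt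
  simpa [vdiv] using h
end

section
/- Let Ω ⊆ ℝ^d be an open set of finite Lebesgue measure and let η, ξ ∈ C_c^∞(ℝ^d;ℝ^d) have disjoint supports, i.e. supp η ∩ supp ξ = ∅. Set L := sup_x ‖Dη(x)‖ and M := sup_x ‖Dξ(x)‖. Then for all (t,s) ∈ ℝ² with |t|·L + |s|·M < 1 one has |(id + tη + sξ)(Ω)| − |Ω| = ( |(id + tη)(Ω)| − |Ω| ) + ( |(id + sξ)(Ω)| − |Ω| ); in particular the mixed second partial derivative ∂²/∂t∂s of (t,s) ↦ |(id + tη + sξ)(Ω)| at (0,0) equals 0. -/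
open MeasureTheory

-- auxiliary: change of variables for a contractive perturbation of the identity
theorem aux_vol_image {d : ℕ} {g : EuclideanSpace ℝ (Fin d) → EuclideanSpace ℝ (Fin d)}
    (hg : Differentiable ℝ g) {K : ℝ} (hK : K < 1)
    (hbound : ∀ x, ‖fderiv ℝ g x‖ ≤ K)
    {Ω : Set (EuclideanSpace ℝ (Fin d))} (hΩ : MeasurableSet Ω) :
    volume ((fun x => x + g x) '' Ω)
      = ∫⁻ x in Ω, ENNReal.ofReal
          |(ContinuousLinearMap.id ℝ (EuclideanSpace ℝ (Fin d)) + fderiv ℝ g x).det| := by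
  have hlip : ∀ x y : EuclideanSpace ℝ (Fin d), ‖g y - g x‖ ≤ K * ‖y - x‖ := fun x y =>
    Convex.norm_image_sub_le_of_norm_fderiv_le (fun z _ => hg z)
      (fun z _ => hbound z) convex_univ (Set.mem_univ x) (Set.mem_univ y)
  have hinj : Function.Injective (fun x => x + g x) := by
    intro x y hxy
    simp only at hxy
    have h1 : x - y = g y - g x := by
      rw [sub_eq_sub_iff_add_eq_add, hxy, add_comm]
    by_contra hne
    have h2 : 0 < ‖x - y‖ := by
      simpa [norm_pos_iff, sub_eq_zero] using hne
    have h3 : ‖x - y‖ ≤ K * ‖x - y‖ := by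
      calc ‖x - y‖ = ‖g y - g x‖ := by rw [h1]
        _ ≤ K * ‖y - x‖ := hlip x y
        _ = K * ‖x - y‖ := by rw [norm_sub_rev]
    nlinarith
  exact (lintegral_abs_det_fderiv_eq_addHaar_image volume hΩ
    (fun x _ => ((hasFDerivAt_id x).add (hg x).hasFDerivAt).hasFDerivWithinAt)
    hinj.injOn).symm

set_option maxHeartbeats 1000000 in
theorem stmt_6 {d : ℕ} (Ω : Set (EuclideanSpace ℝ (Fin d))) (hΩ : IsOpen Ω)
    (hvol : volume Ω < ⊤)
    (η ξ : EuclideanSpace ℝ (Fin d) → EuclideanSpace ℝ (Fin d))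
    (hη : ContDiff ℝ (⊤ : ℕ∞) η) (hηc : HasCompactSupport η)
    (hξ : ContDiff ℝ (⊤ : ℕ∞) ξ) (hξc : HasCompactSupport ξ)
    (hdisj : Disjoint (tsupport η) (tsupport ξ))
    (L M : ℝ) (hL : L = ⨆ x : EuclideanSpace ℝ (Fin d), ‖fderiv ℝ η x‖)
    (hM : M = ⨆ x : EuclideanSpace ℝ (Fin d), ‖fderiv ℝ ξ x‖) :
    (∀ t s : ℝ, |t| * L + |s| * M < 1 →
      (volume ((fun x => x + t • η x + s • ξ x) '' Ω)).toReal - (volume Ω).toReal =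
        ((volume ((fun x => x + t • η x) '' Ω)).toReal - (volume Ω).toReal) +
        ((volume ((fun x => x + s • ξ x) '' Ω)).toReal - (volume Ω).toReal)) ∧
    deriv (fun t : ℝ =>
        deriv (fun s : ℝ =>
          (volume ((fun x => x + t • η x + s • ξ x) '' Ω)).toReal) 0) 0 = 0 := by
  have hηd : Differentiable ℝ η := hη.differentiable (by simp)
  have hξd : Differentiable ℝ ξ := hξ.differentiable (by simp)
  have hηfc : Continuous fun x => fderiv ℝ η x := hη.continuous_fderiv (by simp)
  have hξfc : Continuous fun x => fderiv ℝ ξ x := hξ.continuous_fderiv (by simp)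
  have hLb : ∀ x, ‖fderiv ℝ η x‖ ≤ L := by
    rw [hL]
    intro x
    exact le_ciSup (hηfc.norm.bddAbove_range_of_hasCompactSupport (hηc.fderiv ℝ).norm) x
  have hMb : ∀ x, ‖fderiv ℝ ξ x‖ ≤ M := by
    rw [hM]
    intro x
    exact le_ciSup (hξfc.norm.bddAbove_range_of_hasCompactSupport (hξc.fderiv ℝ).norm) x
  have hL0 : (0:ℝ) ≤ L := le_trans (norm_nonneg _) (hLb 0)
  have hM0 : (0:ℝ) ≤ M := le_trans (norm_nonneg _) (hMb 0)
  have hzero : ∀ x, fderiv ℝ η x = 0 ∨ fderiv ℝ ξ x = 0 := by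
    intro x
    by_cases hx : x ∈ tsupport η
    · right
      have hx' : x ∉ tsupport ξ := fun h => Set.disjoint_left.mp hdisj hx h
      exact Function.notMem_support.mp (fun hm => hx' (support_fderiv_subset ℝ hm))
    · left
      exact Function.notMem_support.mp (fun hm => hx (support_fderiv_subset ℝ hm))
  have hgd : ∀ t s : ℝ, Differentiable ℝ
      (fun x : EuclideanSpace ℝ (Fin d) => t • η x + s • ξ x) :=
    fun t s => ((hηd.const_smul t).add (hξd.const_smul s))
  have hgderiv : ∀ (t s : ℝ) (x : EuclideanSpace ℝ (Fin d)),
      fderiv ℝ (fun x : EuclideanSpace ℝ (Fin d) => t • η x + s • ξ x) x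
        = t • fderiv ℝ η x + s • fderiv ℝ ξ x := by
    intro t s x
    rw [fderiv_fun_add (f := fun y => t • η y) (g := fun y => s • ξ y) ((hηd x).const_smul t) ((hξd x).const_smul s),
      fderiv_fun_const_smul (hηd x), fderiv_fun_const_smul (hξd x)]
  -- key change of variables
  have key : ∀ t s : ℝ, |t| * L + |s| * M < 1 →
      volume ((fun x : EuclideanSpace ℝ (Fin d) => x + t • η x + s • ξ x) '' Ω)
        = ∫⁻ x in Ω, ENNReal.ofReal
            |(ContinuousLinearMap.id ℝ (EuclideanSpace ℝ (Fin d))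
              + (t • fderiv ℝ η x + s • fderiv ℝ ξ x)).det| := by
    intro t s hts
    have hbound : ∀ x, ‖fderiv ℝ
        (fun x : EuclideanSpace ℝ (Fin d) => t • η x + s • ξ x) x‖ ≤ |t| * L + |s| * M := by
      intro x
      rw [hgderiv t s x]
      calc ‖t • fderiv ℝ η x + s • fderiv ℝ ξ x‖
          ≤ ‖t • fderiv ℝ η x‖ + ‖s • fderiv ℝ ξ x‖ := norm_add_le _ _
        _ = |t| * ‖fderiv ℝ η x‖ + |s| * ‖fderiv ℝ ξ x‖ := by
            rw [norm_smul, norm_smul, Real.norm_eq_abs, Real.norm_eq_abs]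
        _ ≤ |t| * L + |s| * M := by
            gcongr
            all_goals first | exact hLb x | exact hMb x | positivity
    have h0 := aux_vol_image (hgd t s) hts hbound hΩ.measurableSet
    have hfn : (fun x : EuclideanSpace ℝ (Fin d) => x + (t • η x + s • ξ x))
        = fun x : EuclideanSpace ℝ (Fin d) => x + t • η x + s • ξ x := by
      funext x; rw [add_assoc]
    rw [hfn] at h0
    rw [h0]
    refine lintegral_congr fun x => ?_
    rw [hgderiv t s x]
  
  have hdetI : (ContinuousLinearMap.id ℝ (EuclideanSpace ℝ (Fin d))).det = 1 := by
    rw [ContinuousLinearMap.det, ContinuousLinearMap.coe_id, LinearMap.det_id]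
  -- pointwise determinant identity
  have hpt : ∀ (t s : ℝ) (x : EuclideanSpace ℝ (Fin d)),
      ENNReal.ofReal |(ContinuousLinearMap.id ℝ (EuclideanSpace ℝ (Fin d))
          + (t • fderiv ℝ η x + s • fderiv ℝ ξ x)).det| + 1
        = ENNReal.ofReal |(ContinuousLinearMap.id ℝ (EuclideanSpace ℝ (Fin d))
            + (t • fderiv ℝ η x + (0:ℝ) • fderiv ℝ ξ x)).det|
          + ENNReal.ofReal |(ContinuousLinearMap.id ℝ (EuclideanSpace ℝ (Fin d))
            + ((0:ℝ) • fderiv ℝ η x + s • fderiv ℝ ξ x)).det| := by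
    intro t s x
    rcases hzero x with h | h
    · rw [show t • fderiv ℝ η x + s • fderiv ℝ ξ x = s • fderiv ℝ ξ x by ext; simp [h],
        show t • fderiv ℝ η x + (0:ℝ) • fderiv ℝ ξ x = 0 by ext; simp [h],
        show (0:ℝ) • fderiv ℝ η x + s • fderiv ℝ ξ x = s • fderiv ℝ ξ x by ext; simp [h],
        add_zero, hdetI, abs_one, ENNReal.ofReal_one]
      rw [add_comm]
    · rw [show t • fderiv ℝ η x + s • fderiv ℝ ξ x = t • fderiv ℝ η x by ext; simp [h],
        show t • fderiv ℝ η x + (0:ℝ) • fderiv ℝ ξ x = t • fderiv ℝ η x by ext; simp [h],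
        show (0:ℝ) • fderiv ℝ η x + s • fderiv ℝ ξ x = 0 by ext; simp [h],
        add_zero, hdetI, abs_one, ENNReal.ofReal_one]
  have hmeas : ∀ t s : ℝ, Measurable (fun x : EuclideanSpace ℝ (Fin d) =>
      ENNReal.ofReal |(ContinuousLinearMap.id ℝ (EuclideanSpace ℝ (Fin d))
        + (t • fderiv ℝ η x + s • fderiv ℝ ξ x)).det|) := by
    intro t s
    exact (ENNReal.continuous_ofReal.comp ((ContinuousLinearMap.continuous_det.comp
      (continuous_const.add ((hηfc.const_smul t).add (hξfc.const_smul s)))).abs)).measurable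
  have hfin : ∀ t s : ℝ, (∫⁻ x in Ω, ENNReal.ofReal
      |(ContinuousLinearMap.id ℝ (EuclideanSpace ℝ (Fin d))
        + (t • fderiv ℝ η x + s • fderiv ℝ ξ x)).det|) < ⊤ := by
    intro t s
    obtain ⟨C, hC⟩ : ∃ C : ℝ, ∀ x, ‖(ContinuousLinearMap.id ℝ (EuclideanSpace ℝ (Fin d))
        + (t • fderiv ℝ η x + s • fderiv ℝ ξ x)).det - 1‖ ≤ C := by
      refine Continuous.bounded_above_of_compact_support
        ((ContinuousLinearMap.continuous_det.comp
          (continuous_const.add ((hηfc.const_smul t).add (hξfc.const_smul s)))).sub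
          continuous_const) ?_
      refine HasCompactSupport.intro (IsCompact.union hηc hξc) ?_
      intro x hx
      have h1 : fderiv ℝ η x = 0 := Function.notMem_support.mp
        (fun hm => hx (Set.mem_union_left _ (support_fderiv_subset ℝ hm)))
      have h2 : fderiv ℝ ξ x = 0 := Function.notMem_support.mp
        (fun hm => hx (Set.mem_union_right _ (support_fderiv_subset ℝ hm)))
      beta_reduce
      rw [show t • fderiv ℝ η x + s • fderiv ℝ ξ x = 0 by ext; simp [h1, h2], add_zero, hdetI]
      simp
    have hle : ∀ x : EuclideanSpace ℝ (Fin d),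
        |(ContinuousLinearMap.id ℝ (EuclideanSpace ℝ (Fin d))
          + (t • fderiv ℝ η x + s • fderiv ℝ ξ x)).det| ≤ C + 1 := by
      intro x
      have h1 := hC x
      rw [Real.norm_eq_abs] at h1
      have h2 := abs_sub_abs_le_abs_sub ((ContinuousLinearMap.id ℝ (EuclideanSpace ℝ (Fin d))
        + (t • fderiv ℝ η x + s • fderiv ℝ ξ x)).det) 1
      simp only [abs_one] at h2
      linarith
    calc (∫⁻ x in Ω, ENNReal.ofReal |(ContinuousLinearMap.id ℝ (EuclideanSpace ℝ (Fin d))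
          + (t • fderiv ℝ η x + s • fderiv ℝ ξ x)).det|)
        ≤ ∫⁻ _x in Ω, ENNReal.ofReal (C + 1) :=
          lintegral_mono fun x => ENNReal.ofReal_le_ofReal (hle x)
      _ = ENNReal.ofReal (C + 1) * volume Ω := setLIntegral_const Ω _
      _ < ⊤ := ENNReal.mul_lt_top ENNReal.ofReal_lt_top hvol
  have hsum : ∀ t s : ℝ,
      (∫⁻ x in Ω, ENNReal.ofReal |(ContinuousLinearMap.id ℝ (EuclideanSpace ℝ (Fin d))
        + (t • fderiv ℝ η x + s • fderiv ℝ ξ x)).det|) + volume Ω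
      = (∫⁻ x in Ω, ENNReal.ofReal |(ContinuousLinearMap.id ℝ (EuclideanSpace ℝ (Fin d))
          + (t • fderiv ℝ η x + (0:ℝ) • fderiv ℝ ξ x)).det|)
        + (∫⁻ x in Ω, ENNReal.ofReal |(ContinuousLinearMap.id ℝ (EuclideanSpace ℝ (Fin d))
          + ((0:ℝ) • fderiv ℝ η x + s • fderiv ℝ ξ x)).det|) := by
    intro t s
    calc (∫⁻ x in Ω, ENNReal.ofReal |(ContinuousLinearMap.id ℝ (EuclideanSpace ℝ (Fin d))
          + (t • fderiv ℝ η x + s • fderiv ℝ ξ x)).det|) + volume Ω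
        = ∫⁻ x in Ω, (ENNReal.ofReal |(ContinuousLinearMap.id ℝ (EuclideanSpace ℝ (Fin d))
          + (t • fderiv ℝ η x + s • fderiv ℝ ξ x)).det| + 1) := by
          rw [lintegral_add_right _ measurable_const, setLIntegral_one]
      _ = ∫⁻ x in Ω, (ENNReal.ofReal |(ContinuousLinearMap.id ℝ (EuclideanSpace ℝ (Fin d))
            + (t • fderiv ℝ η x + (0:ℝ) • fderiv ℝ ξ x)).det|
          + ENNReal.ofReal |(ContinuousLinearMap.id ℝ (EuclideanSpace ℝ (Fin d))
            + ((0:ℝ) • fderiv ℝ η x + s • fderiv ℝ ξ x)).det|) :=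
          lintegral_congr fun x => hpt t s x
      _ = _ := lintegral_add_left (hmeas t 0) _
  -- part 1
  have hpart1 : ∀ t s : ℝ, |t| * L + |s| * M < 1 →
      (volume ((fun x => x + t • η x + s • ξ x) '' Ω)).toReal - (volume Ω).toReal =
        ((volume ((fun x => x + t • η x) '' Ω)).toReal - (volume Ω).toReal) +
        ((volume ((fun x => x + s • ξ x) '' Ω)).toReal - (volume Ω).toReal) := by
    intro t s hts
    have hsL : 0 ≤ |s| * M := mul_nonneg (abs_nonneg s) hM0
    have htL : 0 ≤ |t| * L := mul_nonneg (abs_nonneg t) hL0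
    have h1 : |t| * L + |(0:ℝ)| * M < 1 := by simp only [abs_zero, zero_mul, add_zero]; linarith
    have h2 : |(0:ℝ)| * L + |s| * M < 1 := by simp only [abs_zero, zero_mul, zero_add]; linarith
    have e2 : (fun x : EuclideanSpace ℝ (Fin d) => x + t • η x)
        = fun x : EuclideanSpace ℝ (Fin d) => x + t • η x + (0:ℝ) • ξ x := by
      funext x; simp
    have e3 : (fun x : EuclideanSpace ℝ (Fin d) => x + s • ξ x)
        = fun x : EuclideanSpace ℝ (Fin d) => x + (0:ℝ) • η x + s • ξ x := by
      funext x; simp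
    rw [e2, e3, key t s hts, key t 0 h1, key 0 s h2]
    have h4 : ((∫⁻ x in Ω, ENNReal.ofReal |(ContinuousLinearMap.id ℝ (EuclideanSpace ℝ (Fin d))
        + (t • fderiv ℝ η x + s • fderiv ℝ ξ x)).det|) + volume Ω).toReal
        = ((∫⁻ x in Ω, ENNReal.ofReal |(ContinuousLinearMap.id ℝ (EuclideanSpace ℝ (Fin d))
            + (t • fderiv ℝ η x + (0:ℝ) • fderiv ℝ ξ x)).det|)
          + (∫⁻ x in Ω, ENNReal.ofReal |(ContinuousLinearMap.id ℝ (EuclideanSpace ℝ (Fin d))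
            + ((0:ℝ) • fderiv ℝ η x + s • fderiv ℝ ξ x)).det|)).toReal := by
      rw [hsum t s]
    rw [ENNReal.toReal_add (hfin t s).ne hvol.ne,
      ENNReal.toReal_add (hfin t 0).ne (hfin 0 s).ne] at h4
    linarith
  refine ⟨hpart1, ?_⟩
  -- part 2
  have houter : ∀ t : ℝ, |t| * L < 1 →
      deriv (fun s : ℝ =>
          (volume ((fun x => x + t • η x + s • ξ x) '' Ω)).toReal) 0
        = deriv (fun s : ℝ =>
          (volume ((fun x => x + s • ξ x) '' Ω)).toReal) 0 := by
    intro t ht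
    have hev : (fun s : ℝ => (volume ((fun x => x + t • η x + s • ξ x) '' Ω)).toReal)
        =ᶠ[nhds (0:ℝ)] fun s : ℝ =>
          ((volume ((fun x => x + t • η x) '' Ω)).toReal - (volume Ω).toReal)
            + (volume ((fun x => x + s • ξ x) '' Ω)).toReal := by
      have hop : IsOpen {s : ℝ | |t| * L + |s| * M < 1} :=
        isOpen_lt (continuous_const.add (continuous_abs.mul continuous_const)) continuous_const
      have h0 : (0:ℝ) ∈ {s : ℝ | |t| * L + |s| * M < 1} := by
        simp only [Set.mem_setOf_eq, abs_zero, zero_mul, add_zero]; exact ht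
      filter_upwards [hop.mem_nhds h0] with s hs
      have := hpart1 t s hs
      linarith
    rw [hev.deriv_eq, deriv_const_add]
  have hev2 : (fun t : ℝ => deriv (fun s : ℝ =>
        (volume ((fun x => x + t • η x + s • ξ x) '' Ω)).toReal) 0)
      =ᶠ[nhds (0:ℝ)] fun _ : ℝ => deriv (fun s : ℝ =>
        (volume ((fun x => x + s • ξ x) '' Ω)).toReal) 0 := by
    have hop : IsOpen {t : ℝ | |t| * L < 1} :=
      isOpen_lt (continuous_abs.mul continuous_const) continuous_const
    have h0 : (0:ℝ) ∈ {t : ℝ | |t| * L < 1} := by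
      simp only [Set.mem_setOf_eq, abs_zero, zero_mul]; norm_num
    filter_upwards [hop.mem_nhds h0] with t ht
    exact houter t ht
  rw [hev2.deriv_eq, deriv_const]
end
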